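/- Let H be an RKHS with kernel κ on D ⊆ ℝᵈ such that every unit-norm element of H is C² with Hessian operator norm bounded by Q. Suppose points x₁,…,x_T form a δ-cover of D in the sense that every x ∈ D lies in the convex hull of a subset of the sample points of diameter at most δ. Then the posterior predictive standard deviation satisfies sup_{x ∈ D} σ_T(x) ≤ Q δ² / 4, where σ_T(x)² = κ(x,x) − k(x)ᵀ K⁻¹ k(x). -/

import Mathlib

open RealInnerProductSpace
open Set Finset

lemma norm_fderiv_fderiv_eq {E : Type*} [NormedAddCommGroup E] [NormedSpace ℝ E]
    (f : E → ℝ) (a : E) :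
    ‖fderiv ℝ (fderiv ℝ f) a‖ = ‖iteratedFDeriv ℝ 2 f a‖ := by
  rw [← norm_iteratedFDeriv_fderiv (n := 1), ← norm_iteratedFDeriv_fderiv (n := 0),
    norm_iteratedFDeriv_zero]

lemma taylor_two_bound {E : Type*} [NormedAddCommGroup E] [NormedSpace ℝ E]
    {f : E → ℝ} {Q : ℝ} (hf : ContDiff ℝ 2 f)
    (hQ : ∀ y, ‖iteratedFDeriv ℝ 2 f y‖ ≤ Q) (x y : E) :
    |f y - f x - fderiv ℝ f x (y - x)| ≤ Q / 2 * ‖y - x‖ ^ 2 := by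
  have hdf : ContDiff ℝ 1 (fderiv ℝ f) := hf.fderiv_right (by norm_num)
  have hfd : Differentiable ℝ f := hf.differentiable (by norm_num)
  have lip : ∀ a b : E, ‖fderiv ℝ f a - fderiv ℝ f b‖ ≤ Q * ‖a - b‖ := by
    intro a b
    refine Convex.norm_image_sub_le_of_norm_fderiv_le
      (fun z _ => (hdf.differentiable (by norm_num)).differentiableAt) ?_ convex_univ trivial trivial
    intro z _
    rw [norm_fderiv_fderiv_eq]
    exact hQ z
  set γ : ℝ → E := fun t => x + t • (y - x) with hγdef
  set c : ℝ := fderiv ℝ f x (y - x) with hc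
  set g : ℝ → ℝ := fun t => f (γ t) - f x - t * c with hgdef
  set g' : ℝ → ℝ := fun t => fderiv ℝ f (γ t) (y - x) - c with hg'def
  have hγ : ∀ t : ℝ, HasDerivAt γ (y - x) t := by
    intro t
    simpa [γ] using ((hasDerivAt_id t).smul_const (y - x)).const_add x
  have hg : ∀ t : ℝ, HasDerivAt g (g' t) t := by
    intro t
    have h1 : HasDerivAt (fun t => f (γ t)) (fderiv ℝ f (γ t) (y - x)) t :=
      (hfd (γ t)).hasFDerivAt.comp_hasDerivAt t (hγ t)
    exact (h1.sub_const (f x)).sub (hasDerivAt_mul_const c)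
  have hB : ∀ t : ℝ, HasDerivAt (fun t => Q * ‖y - x‖ ^ 2 / 2 * t ^ 2)
      (Q * ‖y - x‖ ^ 2 / 2 * (2 * t)) t := by
    intro t
    simpa [mul_comm] using (hasDerivAt_pow 2 t).const_mul (Q * ‖y - x‖ ^ 2 / 2)
  have bound : ∀ t ∈ Ico (0:ℝ) 1, ‖g' t‖ ≤ Q * ‖y - x‖ ^ 2 / 2 * (2 * t) := by
    intro t ht
    have h1 : ‖g' t‖ ≤ ‖fderiv ℝ f (γ t) - fderiv ℝ f x‖ * ‖y - x‖ := by
      have := (fderiv ℝ f (γ t) - fderiv ℝ f x).le_opNorm (y - x)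
      simpa [g', c] using this
    have h2 : ‖fderiv ℝ f (γ t) - fderiv ℝ f x‖ ≤ Q * (t * ‖y - x‖) := by
      have := lip (γ t) x
      have hγt : γ t - x = t • (y - x) := by simp [γ]
      rw [hγt, norm_smul, Real.norm_eq_abs, abs_of_nonneg ht.1] at this
      exact this
    calc ‖g' t‖ ≤ Q * (t * ‖y - x‖) * ‖y - x‖ :=
          h1.trans (mul_le_mul_of_nonneg_right h2 (norm_nonneg _))
      _ = Q * ‖y - x‖ ^ 2 / 2 * (2 * t) := by ring
  have key := image_norm_le_of_norm_deriv_right_le_deriv_boundary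
    (f := g) (f' := g') (a := 0) (b := 1)
    (fun t _ => (hg t).continuousAt.continuousWithinAt)
    (fun t _ => (hg t).hasDerivWithinAt)
    (by simp [g, γ]) hB bound (right_mem_Icc.mpr zero_le_one)
  have hγ1 : γ 1 = y := by simp [γ]
  have : g 1 = f y - f x - c := by simp [g, hγ1]
  rw [this, Real.norm_eq_abs] at key
  calc |f y - f x - c| ≤ Q * ‖y - x‖ ^ 2 / 2 * 1 ^ 2 := key
    _ = Q / 2 * ‖y - x‖ ^ 2 := by ring

lemma variance_bound {E : Type*} [NormedAddCommGroup E] [InnerProductSpace ℝ E]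
    {ι : Type*} [Fintype ι] (w : ι → ℝ) (p : ι → E) (x : E) {δ : ℝ}
    (hw0 : ∀ i, 0 ≤ w i) (hw1 : ∑ i, w i = 1) (hx : ∑ i, w i • p i = x)
    (hδ : ∀ i j, dist (p i) (p j) ≤ δ) :
    ∑ i, w i * ‖p i - x‖ ^ 2 ≤ δ ^ 2 / 2 := by
  have hip : ∑ i, w i * ⟪p i, x⟫ = ‖x‖ ^ 2 := by
    have h : ∑ i, w i * ⟪p i, x⟫ = ⟪∑ i, w i • p i, x⟫ := by
      rw [sum_inner]
      exact Finset.sum_congr rfl fun i _ => (real_inner_smul_left _ _ _).symm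
    rw [h, hx, real_inner_self_eq_norm_sq]
  have key : ∑ i, w i * ‖p i - x‖ ^ 2 = ∑ i, w i * ‖p i‖ ^ 2 - ‖x‖ ^ 2 := by
    have h1 : ∑ i, w i * ‖p i - x‖ ^ 2
        = ∑ i, (w i * ‖p i‖ ^ 2 - 2 * (w i * ⟪p i, x⟫) + w i * ‖x‖ ^ 2) := by
      refine Finset.sum_congr rfl fun i _ => ?_
      rw [norm_sub_sq_real]; ring
    rw [h1, Finset.sum_add_distrib, Finset.sum_sub_distrib, ← Finset.mul_sum, hip,
      ← Finset.sum_mul, hw1]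
    ring
  have hipp : ∑ i, ∑ j, w i * w j * ⟪p i, p j⟫ = ‖x‖ ^ 2 := by
    have h : ∀ i, ∑ j, w i * w j * ⟪p i, p j⟫ = w i * ⟪p i, x⟫ := by
      intro i
      have : ⟪p i, x⟫ = ∑ j, w j * ⟪p i, p j⟫ := by
        rw [← hx, inner_sum]
        exact Finset.sum_congr rfl fun j _ => real_inner_smul_right _ _ _
      rw [this, Finset.mul_sum]
      exact Finset.sum_congr rfl fun j _ => by ring
    rw [Finset.sum_congr rfl fun i _ => h i, hip]
  have key2 : ∑ i, ∑ j, w i * w j * ‖p i - p j‖ ^ 2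
      = 2 * (∑ i, w i * ‖p i‖ ^ 2 - ‖x‖ ^ 2) := by
    have h1 : ∀ i, ∑ j, w i * w j * ‖p i - p j‖ ^ 2
        = w i * ‖p i‖ ^ 2 + w i * ∑ j, w j * ‖p j‖ ^ 2
          - 2 * ∑ j, w i * w j * ⟪p i, p j⟫ := by
      intro i
      have h2 : ∀ j, w i * w j * ‖p i - p j‖ ^ 2
          = w j * (w i * ‖p i‖ ^ 2) + w i * (w j * ‖p j‖ ^ 2)
            - 2 * (w i * w j * ⟪p i, p j⟫) := by
        intro j; rw [norm_sub_sq_real]; ring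
      rw [Finset.sum_congr rfl fun j _ => h2 j, Finset.sum_sub_distrib,
        Finset.sum_add_distrib, ← Finset.sum_mul, hw1, one_mul, ← Finset.mul_sum,
        ← Finset.mul_sum]
    rw [Finset.sum_congr rfl fun i _ => h1 i, Finset.sum_sub_distrib, Finset.sum_add_distrib,
      ← Finset.sum_mul, hw1, one_mul, ← Finset.mul_sum, hipp]
    ring
  have bnd : ∑ i, ∑ j, w i * w j * ‖p i - p j‖ ^ 2 ≤ δ ^ 2 := by
    calc ∑ i, ∑ j, w i * w j * ‖p i - p j‖ ^ 2 ≤ ∑ i, ∑ j, w i * w j * δ ^ 2 := by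
          refine Finset.sum_le_sum fun i _ => Finset.sum_le_sum fun j _ => ?_
          refine mul_le_mul_of_nonneg_left ?_ (mul_nonneg (hw0 i) (hw0 j))
          have hd : ‖p i - p j‖ ≤ δ := by rw [← dist_eq_norm]; exact hδ i j
          exact pow_le_pow_left₀ (norm_nonneg _) hd 2
      _ = δ ^ 2 := by
          have h3 : ∀ i : ι, ∑ j, w i * w j * δ ^ 2 = w i * δ ^ 2 := by
            intro i
            rw [Finset.sum_congr rfl
              (fun j _ => (by ring : w i * w j * δ ^ 2 = w j * (w i * δ ^ 2))),
              ← Finset.sum_mul, hw1, one_mul]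
          rw [Finset.sum_congr rfl fun i _ => h3 i, ← Finset.sum_mul, hw1, one_mul]
  linarith

lemma combo_bound {E : Type*} [NormedAddCommGroup E] [InnerProductSpace ℝ E]
    {ι : Type*} [Fintype ι] {f : E → ℝ} {Q δ : ℝ}
    (hf : ContDiff ℝ 2 f) (hQ : ∀ y, ‖iteratedFDeriv ℝ 2 f y‖ ≤ Q)
    (w : ι → ℝ) (p : ι → E) (x : E)
    (hw0 : ∀ i, 0 ≤ w i) (hw1 : ∑ i, w i = 1) (hx : ∑ i, w i • p i = x)
    (hδ : ∀ i j, dist (p i) (p j) ≤ δ) :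
    |f x - ∑ i, w i * f (p i)| ≤ Q * δ ^ 2 / 4 := by
  have hQ0 : 0 ≤ Q := le_trans (norm_nonneg _) (hQ x)
  have hlin : ∑ i, w i * (fderiv ℝ f x (p i - x)) = 0 := by
    have hz : ∑ i, w i • (p i - x) = 0 := by
      simp only [smul_sub, Finset.sum_sub_distrib, hx, ← Finset.sum_smul, hw1, one_smul,
        sub_self]
    have : ∑ i, w i * (fderiv ℝ f x (p i - x)) = fderiv ℝ f x (∑ i, w i • (p i - x)) := by
      rw [map_sum]
      exact Finset.sum_congr rfl fun i _ => by rw [map_smul]; rfl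
    rw [this, hz, map_zero]
  have key : f x - ∑ i, w i * f (p i)
      = -∑ i, w i * (f (p i) - f x - fderiv ℝ f x (p i - x)) := by
    have h1 : ∑ i, w i * (f (p i) - f x - fderiv ℝ f x (p i - x))
        = ∑ i, w i * f (p i) - (∑ i, w i) * f x - ∑ i, w i * (fderiv ℝ f x (p i - x)) := by
      rw [Finset.sum_mul]
      rw [← Finset.sum_sub_distrib, ← Finset.sum_sub_distrib]
      exact Finset.sum_congr rfl fun i _ => by ring
    rw [h1, hw1, hlin]; ring
  rw [key, abs_neg]
  calc |∑ i, w i * (f (p i) - f x - fderiv ℝ f x (p i - x))|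
      ≤ ∑ i, |w i * (f (p i) - f x - fderiv ℝ f x (p i - x))| :=
        Finset.abs_sum_le_sum_abs _ _
    _ ≤ ∑ i, w i * (Q / 2 * ‖p i - x‖ ^ 2) := by
        refine Finset.sum_le_sum fun i _ => ?_
        rw [abs_mul, abs_of_nonneg (hw0 i)]
        exact mul_le_mul_of_nonneg_left (taylor_two_bound hf hQ x (p i)) (hw0 i)
    _ = Q / 2 * ∑ i, w i * ‖p i - x‖ ^ 2 := by
        rw [Finset.mul_sum]; exact Finset.sum_congr rfl fun i _ => by ring
    _ ≤ Q / 2 * (δ ^ 2 / 2) := by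
        refine mul_le_mul_of_nonneg_left (variance_bound w p x hw0 hw1 hx hδ) (by linarith)
    _ = Q * δ ^ 2 / 4 := by ring

/-- Variance bound: in an RKHS on `D ⊆ ℝᵈ` with feature map `k` (kernel
`κ(x,y) = ⟪k x, k y⟫`, evaluations `h(x) = ⟪h, k x⟫`) such that every unit-norm element
of the RKHS is `C²` with Hessian operator norm bounded by `Q`, if the sample points
`x₁,…,x_T` form a `δ`-cover of `D` (every `x ∈ D` lies in the convex hull of a subset of
the sample points of diameter at most `δ`) and the Gram matrix `K` is invertible, then
the posterior predictive standard deviation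
`σ_T(x) = √(κ(x,x) − k(x)ᵀ K⁻¹ k(x))` satisfies `σ_T(x) ≤ Q δ²/4` for all `x ∈ D`. -/
theorem posterior_std_dev_bound
    {H : Type*} [NormedAddCommGroup H] [InnerProductSpace ℝ H] [CompleteSpace H]
    {d T : ℕ} (k : EuclideanSpace ℝ (Fin d) → H)
    (D : Set (EuclideanSpace ℝ (Fin d)))
    (Q δ : ℝ)
    (hsmooth : ∀ h : H, ‖h‖ = 1 →
      ContDiff ℝ 2 (fun z => ⟪h, k z⟫) ∧
        ∀ y, ‖iteratedFDeriv ℝ 2 (fun z => ⟪h, k z⟫) y‖ ≤ Q)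
    (xs : Fin T → EuclideanSpace ℝ (Fin d))
    (hcover : ∀ x ∈ D, ∃ s : Set (EuclideanSpace ℝ (Fin d)),
      s ⊆ Set.range xs ∧ (∀ y ∈ s, ∀ z ∈ s, dist y z ≤ δ) ∧ x ∈ convexHull ℝ s)
    (Gram : Matrix (Fin T) (Fin T) ℝ)
    (hGram : ∀ i j, Gram i j = ⟪k (xs i), k (xs j)⟫)
    (hInv : IsUnit Gram.det) :
    ∀ x ∈ D,
      Real.sqrt (⟪k x, k x⟫ -
          dotProduct (fun i => ⟪k x, k (xs i)⟫)
            (Gram⁻¹.mulVec fun i => ⟪k x, k (xs i)⟫)) ≤ Q * δ ^ 2 / 4 := by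
  intro x hx
  obtain ⟨s, hs_sub, hdiam, hhull⟩ := hcover x hx
  obtain ⟨ι, _inst, w, z, hw0, hw1, hzs, hzx⟩ := mem_convexHull_iff_exists_fintype.mp hhull
  -- nonemptiness
  have hne : Nonempty ι := by
    rcases isEmpty_or_nonempty ι with h | h
    · rw [Finset.univ_eq_empty, Finset.sum_empty] at hw1; exact absurd hw1 zero_ne_one
    · exact h
  obtain ⟨i0⟩ := hne
  have hδ0 : 0 ≤ δ := by
    have := hdiam (z i0) (hzs i0) (z i0) (hzs i0)
    simpa using this
  obtain ⟨j0, hj0⟩ := hs_sub (hzs i0)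
  have hT : Nonempty (Fin T) := ⟨j0⟩
  -- Q ≥ 0
  have hQ0 : 0 ≤ Q := by
    have hex : ∃ i, k (xs i) ≠ 0 := by
      by_contra hall
      push_neg at hall
      have hzero : Gram = 0 := by
        ext i j; rw [hGram i j, hall i, inner_zero_left]; rfl
      rw [hzero, Matrix.det_zero] at hInv
      exact one_ne_zero (isUnit_zero_iff.mp hInv).symm
    obtain ⟨i, hi⟩ := hex
    have hn : ‖(‖k (xs i)‖⁻¹ • k (xs i))‖ = 1 := norm_smul_inv_norm hi
    exact le_trans (norm_nonneg _) ((hsmooth _ hn).2 x)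
  have hQδ : 0 ≤ Q * δ ^ 2 / 4 := by positivity
  set b : Fin T → ℝ := fun i => ⟪k x, k (xs i)⟫ with hb
  set α : Fin T → ℝ := Gram⁻¹.mulVec b with hα
  set u : H := k x - ∑ i, α i • k (xs i) with hu
  have hGA : Gram.mulVec α = b := by
    rw [hα, Matrix.mulVec_mulVec, Matrix.mul_nonsing_inv _ hInv, Matrix.one_mulVec]
  have horth : ∀ j, ⟪k (xs j), u⟫ = 0 := by
    intro j
    have h1 : ⟪k (xs j), u⟫ = b j - ∑ i, α i * Gram j i := by
      rw [hu, inner_sub_right, inner_sum]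
      congr 1
      · rw [hb]; exact real_inner_comm _ _
      · exact Finset.sum_congr rfl fun i _ => by
          rw [real_inner_smul_right, hGram j i]
    have h2 : ∑ i, α i * Gram j i = (Gram.mulVec α) j := by
      rw [Matrix.mulVec, dotProduct]
      exact Finset.sum_congr rfl fun i _ => mul_comm _ _
    rw [h1, h2, hGA, sub_self]
  have huu : ⟪k x, k x⟫ - dotProduct b α = ‖u‖ ^ 2 := by
    rw [← real_inner_self_eq_norm_sq]
    have h1 : ⟪u, u⟫ = ⟪k x, u⟫ - ∑ i, α i * ⟪k (xs i), u⟫ := by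
      rw [hu]
      nth_rewrite 1 [inner_sub_left]
      rw [sum_inner]
      congr 1
      exact Finset.sum_congr rfl fun i _ => real_inner_smul_left _ _ _
    have h2 : ⟪k x, u⟫ = ⟪k x, k x⟫ - ∑ i, b i * α i := by
      rw [hu, inner_sub_right, inner_sum]
      congr 1
      exact Finset.sum_congr rfl fun i _ => by
        rw [real_inner_smul_right, hb, mul_comm]
    rw [h1, h2]
    simp only [horth, mul_zero, Finset.sum_const_zero, sub_zero]
    rfl
  -- the competitor
  set v : H := ∑ i, w i • k (z i) with hv
  have horthz : ∀ i, ⟪k (z i), u⟫ = 0 := by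
    intro i
    obtain ⟨j, hj⟩ := hs_sub (hzs i)
    rw [← hj]; exact horth j
  have hcz : ⟪(∑ i, α i • k (xs i)) - v, u⟫ = 0 := by
    rw [inner_sub_left, hv, sum_inner, sum_inner]
    simp [real_inner_smul_left, horth, horthz]
  have hdecomp : k x - v = u + ((∑ i, α i • k (xs i)) - v) := by
    rw [hu]; abel
  have hle : ‖u‖ ^ 2 ≤ ‖k x - v‖ ^ 2 := by
    rw [hdecomp, norm_add_sq_real, real_inner_comm, hcz]
    nlinarith [sq_nonneg ‖(∑ i, α i • k (xs i)) - v‖, sq_nonneg ‖u‖]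
  have hsqrt : Real.sqrt (⟪k x, k x⟫ - dotProduct b (Gram⁻¹.mulVec b)) ≤ ‖k x - v‖ := by
    rw [← hα, huu]
    rw [show ‖u‖ ^ 2 = ‖u‖ * ‖u‖ by ring, Real.sqrt_mul_self (norm_nonneg u)]
    have := Real.sqrt_le_sqrt hle
    nlinarith [norm_nonneg u, norm_nonneg (k x - v)]
  refine le_trans hsqrt ?_
  -- bound ‖k x - v‖
  by_cases hkv : k x - v = 0
  · rw [hkv, norm_zero]; exact hQδ
  · set h : H := ‖k x - v‖⁻¹ • (k x - v) with hh
    have hh1 : ‖h‖ = 1 := norm_smul_inv_norm hkv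
    obtain ⟨hfC, hfQ⟩ := hsmooth h hh1
    have hδz : ∀ i j, dist (z i) (z j) ≤ δ := fun i j => hdiam _ (hzs i) _ (hzs j)
    have hval : ⟪h, k x⟫ - ∑ i, w i * ⟪h, k (z i)⟫ = ‖k x - v‖ := by
      have h1 : ∑ i, w i * ⟪h, k (z i)⟫ = ⟪h, v⟫ := by
        rw [hv, inner_sum]
        exact (Finset.sum_congr rfl fun i _ => by rw [real_inner_smul_right]).symm
      rw [h1, ← inner_sub_right, hh, real_inner_smul_left, real_inner_self_eq_norm_sq]
      have hpos : ‖k x - v‖ ≠ 0 := norm_ne_zero_iff.mpr hkv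
      field_simp
    calc ‖k x - v‖ = ⟪h, k x⟫ - ∑ i, w i * ⟪h, k (z i)⟫ := hval.symm
      _ ≤ |⟪h, k x⟫ - ∑ i, w i * ⟪h, k (z i)⟫| := le_abs_self _
      _ ≤ Q * δ ^ 2 / 4 := combo_bound hfC hfQ w z x hw0 hw1 hzx hδz
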